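/- For all n, k ≥ 1 and all m_1, m_2 > ρ(n,k): L_{m_1}* ⇛_{n,k} L_{m_2}*. -/

import Mathlib

open FirstOrder Language

namespace Paper

variable {L : FirstOrder.Language} {α : Type*}

/-! ### Prefix classes `Σ_{n,k}` and `Π_{n,k}` -/

/-- Prepend a block of `j` existential quantifiers to a bounded formula. -/
def exN : ∀ (j : ℕ) {m : ℕ}, L.BoundedFormula α (m + j) → L.BoundedFormula α m
  | 0, _, φ => φ
  | j + 1, _, φ => exN j φ.ex

/-- Prepend a block of `j` universal quantifiers to a bounded formula. -/
def allN : ∀ (j : ℕ) {m : ℕ}, L.BoundedFormula α (m + j) → L.BoundedFormula α m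
  | 0, _, φ => φ
  | j + 1, _, φ => allN j φ.all

/-- `IsSigmaPi k b n m φ` says that the formula `φ` is in prenex form with at most `n`
alternating blocks of at most `k` quantifiers, starting with an existential block when
`b = true` (the class `Σ_{n,k}`) and with a universal block when `b = false` (`Π_{n,k}`). -/
def IsSigmaPi (k : ℕ) : Bool → ℕ → ∀ m : ℕ, L.BoundedFormula α m → Prop
  | _, 0, _, φ => φ.IsQF
  | b, n + 1, m, φ =>
      IsSigmaPi k (!b) n m φ ∨
        ∃ j : ℕ, j ≤ k ∧ ∃ ψ : L.BoundedFormula α (m + j),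
          IsSigmaPi k (!b) n (m + j) ψ ∧ φ = if b then exN j ψ else allN j ψ

/-- `φ` is a `Σ_{n,k}` formula. -/
abbrev IsSigma (n k : ℕ) {m : ℕ} (φ : L.BoundedFormula α m) : Prop :=
  IsSigmaPi k true n m φ

/-- `φ` is a `Π_{n,k}` formula. -/
abbrev IsPi (n k : ℕ) {m : ℕ} (φ : L.BoundedFormula α m) : Prop :=
  IsSigmaPi k false n m φ

/-! ### The relations `⇛_{n,k}` and `≡_{n,k}` -/

/-- `A ⇛_{n,k} B` : every `Σ_{n,k}` sentence true in `A` is true in `B`. -/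
def SigImp (L : FirstOrder.Language) (n k : ℕ) (A : Type*) (B : Type*)
    [L.Structure A] [L.Structure B] : Prop :=
  ∀ φ : L.Sentence, IsSigma n k φ → A ⊨ φ → B ⊨ φ

/-- `A ≡_{n,k} B`. -/
def SigEquiv (L : FirstOrder.Language) (n k : ℕ) (A : Type*) (B : Type*)
    [L.Structure A] [L.Structure B] : Prop :=
  SigImp L n k A B ∧ SigImp L n k B A

/-- `(A, ā) ⇛_{n,k} (B, b̄)` : every `Σ_{n,k}` formula satisfied by `ā` in `A` is satisfied
by `b̄` in `B`. -/
def SigImpT (L : FirstOrder.Language) (n k : ℕ) {l : ℕ} (A : Type*) [L.Structure A]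
    (a : Fin l → A) (B : Type*) [L.Structure B] (b : Fin l → B) : Prop :=
  ∀ φ : L.Formula (Fin l), IsSigma n k φ → φ.Realize a → φ.Realize b

/-! ### Quantifier rank -/

/-- The quantifier rank of a formula. -/
def qrank : ∀ {m : ℕ}, L.BoundedFormula α m → ℕ
  | _, BoundedFormula.falsum => 0
  | _, BoundedFormula.equal _ _ => 0
  | _, BoundedFormula.rel _ _ => 0
  | _, BoundedFormula.imp f g => max (qrank f) (qrank g)
  | _, BoundedFormula.all f => qrank f + 1

/-- `A ≡_m B` : `A` and `B` satisfy the same sentences of quantifier rank at most `m`. -/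
def RankEquiv (L : FirstOrder.Language) (m : ℕ) (A : Type*) (B : Type*)
    [L.Structure A] [L.Structure B] : Prop :=
  ∀ φ : L.Sentence, qrank φ ≤ m → (A ⊨ φ ↔ B ⊨ φ)

/-! ### Ordered structures -/

/-- The interpretation of a distinguished binary relation symbol. -/
def rle (le : L.Relations 2) {A : Type*} [L.Structure A] (x y : A) : Prop :=
  Structure.RelMap le ![x, y]

/-- The distinguished binary relation symbol `le` is interpreted as a linear order. -/
def IsOrderedLe (le : L.Relations 2) (A : Type*) [L.Structure A] : Prop :=
  (∀ x : A, rle le x x) ∧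
    (∀ x y : A, rle le x y → rle le y x → x = y) ∧
    (∀ x y z : A, rle le x y → rle le y z → rle le x z) ∧
    (∀ x y : A, rle le x y ∨ rle le y x)

/-- `x` is the minimum element w.r.t. the interpretation of `le`. -/
def IsMinimal (le : L.Relations 2) {A : Type*} [L.Structure A] (x : A) : Prop :=
  ∀ y, rle le x y

/-- `x` is the maximum element w.r.t. the interpretation of `le`. -/
def IsMaximal (le : L.Relations 2) {A : Type*} [L.Structure A] (x : A) : Prop :=
  ∀ y, rle le y x

/-- The function `ρ`: `ρ(1,k) = 2k+2` and `ρ(n+1,k) = (k+2)(ρ(n,k)+1)`. -/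
def rho : ℕ → ℕ → ℕ
  | 0, _ => 0
  | 1, k => 2 * k + 2
  | n + 2, k => (k + 2) * (rho (n + 1) k + 1)

/-! ### Starred structures:  `A*` is `A` with constants for its min and max elements.
Satisfaction of (prefix-class) sentences of the enlarged vocabulary in `A*` corresponds to
satisfaction of (prefix-class) formulas in two extra free variables, instantiated to the
minimum and the maximum. -/

/-- `A* ⇛_{n,k} B*`. -/
def SigImpStar (L : FirstOrder.Language) (n k : ℕ) (A : Type*) [L.Structure A]
    (mnA mxA : A) (B : Type*) [L.Structure B] (mnB mxB : B) : Prop :=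
  SigImpT L n k A ![mnA, mxA] B ![mnB, mxB]

/-- The tuple `ā` extended by the two distinguished constants. -/
def starT {A : Type*} {l : ℕ} (a : Fin l → A) (mn mx : A) : Fin (l + 2) → A :=
  Fin.append a ![mn, mx]

/-- `(A, ā)* ⇛_{n,k} (B, b̄)*`. -/
def SigImpTStar (L : FirstOrder.Language) (n k : ℕ) {l : ℕ} (A : Type*) [L.Structure A]
    (a : Fin l → A) (mnA mxA : A) (B : Type*) [L.Structure B] (b : Fin l → B)
    (mnB mxB : B) : Prop :=
  SigImpT L n k A (starT a mnA mxA) B (starT b mnB mxB)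

/-! ### Ordered sums -/

/-- `C`, together with the inclusion maps `f : A → C` and `g : B → C`, is the ordered sum
`A ⊕ B`: the maximum of `A` is identified with the minimum of `B`, the order places `A`
below `B`, and every other relation symbol is interpreted by the union of its
interpretations. -/
structure IsOrderedSum2 (L : FirstOrder.Language) (le : L.Relations 2)
    (A B C : Type*) [L.Structure A] [L.Structure B] [L.Structure C]
    (mxA : A) (mnB : B) (f : A → C) (g : B → C) : Prop where
  injf : Function.Injective f
  injg : Function.Injective g
  cover : ∀ c : C, (∃ a, f a = c) ∨ (∃ b, g b = c)
  glue : f mxA = g mnB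
  overlap : ∀ a b, f a = g b → a = mxA ∧ b = mnB
  le_iff : ∀ c c' : C, rle le c c' ↔
      ((∃ a a', f a = c ∧ f a' = c' ∧ rle le a a') ∨
       (∃ b b', g b = c ∧ g b' = c' ∧ rle le b b') ∨
       (∃ a b, f a = c ∧ g b = c'))
  rel_iff : ∀ (m : ℕ) (r : L.Relations m) (v : Fin m → C), ¬(m = 2 ∧ HEq r le) →
      (Structure.RelMap r v ↔
        (∃ w : Fin m → A, (∀ p, f (w p) = v p) ∧ Structure.RelMap r w) ∨
        (∃ w : Fin m → B, (∀ p, g (w p) = v p) ∧ Structure.RelMap r w))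

/-- `C`, together with the inclusion maps `f i : M i → C`, is the iterated ordered sum
`⊕_{i} M i` (where `mn i`/`mx i` are the minimum/maximum of `M i`). -/
structure IsOrderedSumSeq (L : FirstOrder.Language) (le : L.Relations 2) (s : ℕ)
    (M : Fin s → Type*) [∀ i, L.Structure (M i)] (mn mx : ∀ i, M i)
    (C : Type*) [L.Structure C] (f : ∀ i, M i → C) : Prop where
  inj : ∀ i, Function.Injective (f i)
  cover : ∀ c : C, ∃ i a, f i a = c
  glue : ∀ (i : Fin s) (h : i.1 + 1 < s), f i (mx i) = f ⟨i.1 + 1, h⟩ (mn ⟨i.1 + 1, h⟩)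
  overlap : ∀ (i j : Fin s) (a : M i) (b : M j), i < j → f i a = f j b →
      j.1 = i.1 + 1 ∧ a = mx i ∧ b = mn j
  le_iff : ∀ c c' : C, rle le c c' ↔
      ((∃ i a b, f i a = c ∧ f i b = c' ∧ rle le a b) ∨
       (∃ i j a b, i < j ∧ f i a = c ∧ f j b = c'))
  rel_iff : ∀ (m : ℕ) (r : L.Relations m) (v : Fin m → C), ¬(m = 2 ∧ HEq r le) →
      (Structure.RelMap r v ↔
        ∃ i, ∃ w : Fin m → M i, (∀ p, f i (w p) = v p) ∧ Structure.RelMap r w)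

/-! ### The (n,k)-prefix Ehrenfeucht–Fraïssé game -/

/-- The history of the play before round `i`. -/
def histOf {A B : Type*} {k : ℕ} (n : ℕ) (a : Fin n → Fin k → A) (b : Fin n → Fin k → B)
    (i : Fin n) : List ((Fin k → A) × (Fin k → B)) :=
  List.ofFn (fun j : Fin i.1 => (a ⟨j.1, j.2.trans i.2⟩, b ⟨j.1, j.2.trans i.2⟩))

/-- A strategy for Duplicator: responses to Spoiler moves in `A` and in `B`,
given the history of earlier rounds. -/
structure DupStrategy (L : FirstOrder.Language) (k : ℕ) (A B : Type*)
    [L.Structure A] [L.Structure B] where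
  respB : List ((Fin k → A) × (Fin k → B)) → (Fin k → A) → (Fin k → B)
  respA : List ((Fin k → A) × (Fin k → B)) → (Fin k → B) → (Fin k → A)

/-- A play `(a, b)` of the `(n,k)`-prefix EF game is consistent with Duplicator's strategy:
in odd rounds (`i.1` even) Spoiler moves in `A` and Duplicator responds in `B`, in even
rounds Spoiler moves in `B` and Duplicator responds in `A`. -/
def DupStrategy.Consistent {A B : Type*} [L.Structure A] [L.Structure B] {k : ℕ}
    (st : DupStrategy L k A B) (n : ℕ)
    (a : Fin n → Fin k → A) (b : Fin n → Fin k → B) : Prop :=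
  ∀ i : Fin n,
    (i.1 % 2 = 0 → b i = st.respB (histOf n a b i) (a i)) ∧
    (i.1 % 2 = 1 → a i = st.respA (histOf n a b i) (b i))

/-- The map sending `a` pointwise to `b` is a partial isomorphism (for a relational
language). -/
def IsPartialIso (L : FirstOrder.Language) {ι : Type*} (A B : Type*)
    [L.Structure A] [L.Structure B] (a : ι → A) (b : ι → B) : Prop :=
  (∀ p q : ι, a p = a q ↔ b p = b q) ∧
    ∀ (m : ℕ) (r : L.Relations m) (v : Fin m → ι),
      (Structure.RelMap r (a ∘ v) ↔ Structure.RelMap r (b ∘ v))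

/-- Duplicator's strategy is winning in the `(n,k)`-prefix EF game. -/
def DupStrategy.Winning {A B : Type*} [L.Structure A] [L.Structure B] {k : ℕ}
    (st : DupStrategy L k A B) (n : ℕ) : Prop :=
  ∀ (a : Fin n → Fin k → A) (b : Fin n → Fin k → B), st.Consistent n a b →
    IsPartialIso L A B (fun p : Fin n × Fin k => a p.1 p.2) (fun p : Fin n × Fin k => b p.1 p.2)


/-! ### The vocabularies `σ_n` -/

/-- Indices `i` with `2 ≤ i ≤ n`, indexing the symbols `P_i, S_i, R_i` of `σ_n`. -/
abbrev HighIdx (n : ℕ) : Type := {i : ℕ // 2 ≤ i ∧ i ≤ n}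

/-- The vocabulary `σ_n`: binary symbols `≤, S, R` and `S_i, R_i` (for `2 ≤ i ≤ n`),
and unary symbols `P_i` (for `2 ≤ i ≤ n`).  In particular `σ_1` has exactly the three
binary symbols `≤, S, R`. -/
def sig (n : ℕ) : FirstOrder.Language where
  Functions := fun _ => Empty
  Relations := fun m =>
    match m with
    | 1 => HighIdx n
    | 2 => (Fin 3) ⊕ (HighIdx n × Bool)
    | _ => Empty

/-- The symbol `≤` of `σ_n`. -/
def leSym (n : ℕ) : (sig n).Relations 2 := Sum.inl 0
/-- The symbol `S` of `σ_n`. -/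
def sSym (n : ℕ) : (sig n).Relations 2 := Sum.inl 1
/-- The symbol `R` of `σ_n`. -/
def rSym (n : ℕ) : (sig n).Relations 2 := Sum.inl 2
/-- The symbol `S_i` of `σ_n`. -/
def snSym (n i : ℕ) (h : 2 ≤ i ∧ i ≤ n) : (sig n).Relations 2 := Sum.inr (⟨i, h⟩, false)
/-- The symbol `R_i` of `σ_n`. -/
def rnSym (n i : ℕ) (h : 2 ≤ i ∧ i ≤ n) : (sig n).Relations 2 := Sum.inr (⟨i, h⟩, true)
/-- The symbol `P_i` of `σ_n`. -/
def pnSym (n i : ℕ) (h : 2 ≤ i ∧ i ≤ n) : (sig n).Relations 1 := ⟨i, h⟩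

/-! ### Semantics of the sentences `SomeTotalR_n` -/

/-- A bundle of interpretations of all the symbols of the vocabularies `σ_n` over a
universe `A`. -/
structure Interp (A : Type*) where
  le : A → A → Prop
  S : A → A → Prop
  R : A → A → Prop
  Sn : ℕ → A → A → Prop
  Rn : ℕ → A → A → Prop
  Pn : ℕ → A → Prop

variable {A : Type*}

/-- `x < y` as an abbreviation for `x ≤ y ∧ x ≠ y`. -/
def Interp.lt (I : Interp A) (x y : A) : Prop := I.le x y ∧ x ≠ y

/-- `STR I m D` is the meaning of the sentence `SomeTotalR_{m+1}` with all quantifiers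
relativized to the set `D`.
For `m = 0`: `¬PartialSucc ∨ ∃ x y (R(x,y) ∧ Total(x,y))` where `PartialSucc` says that
`S(x,y)` implies `y` is the immediate `≤`-successor of `x`, and `Total(x,y)` says that
`x < y` and every `z` in `[x,y)` has an `S`-successor within `(z,y]`.
For `m+1` (i.e. `SomeTotalR_n`, `n = m+2`): the same with `S` replaced by
`Succ_n(x,y) := P_n(x) ∧ P_n(y) ∧ S_n(x,y) ∧ (SomeTotalR_{n-1})^{[x,y]}`, the quantifier
in `PartialSucc_n` and `Total_n` relativized to `P_n`, and `R` replaced by `R_n`. -/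
def STR (I : Interp A) : ℕ → (A → Prop) → Prop
  | 0, D =>
      (¬ ∀ x y, D x → D y → I.S x y →
          (I.lt x y ∧ ∀ z, D z → ¬(I.lt x z ∧ I.lt z y))) ∨
      ∃ x y, D x ∧ D y ∧ I.R x y ∧
        (I.lt x y ∧ ∀ z, D z → I.le x z → I.lt z y →
          ∃ w, D w ∧ I.lt z w ∧ I.le w y ∧ I.S z w)
  | m + 1, D =>
      let nn := m + 2
      let Succn : A → A → Prop := fun x y =>
        I.Pn nn x ∧ I.Pn nn y ∧ I.Sn nn x y ∧
          (I.le x y ∧ STR I m (fun z => D z ∧ I.le x z ∧ I.le z y))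
      (¬ ∀ x y, D x → D y → Succn x y →
          ∀ z, D z → I.Pn nn z → I.le z x ∨ I.le y z) ∨
      ∃ x y, D x ∧ D y ∧ I.Rn nn x y ∧
        (I.lt x y ∧ ∀ z, D z → I.Pn nn z → I.le x z → I.lt z y →
          ∃ w, D w ∧ I.lt z w ∧ I.le w y ∧ Succn z w)

/-- The meaning of the sentence `SomeTotalR_n` (for `n ≥ 1`). -/
def SomeTotalRSem (n : ℕ) (I : Interp A) : Prop :=
  STR I (n - 1) (fun _ => True)

/-- The interpretation bundle determined by a `σ_n`-structure. -/
def interpOf (n : ℕ) (A : Type*) [(sig n).Structure A] : Interp A where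
  le := fun x y => FirstOrder.Language.Structure.RelMap (leSym n) ![x, y]
  S := fun x y => FirstOrder.Language.Structure.RelMap (sSym n) ![x, y]
  R := fun x y => FirstOrder.Language.Structure.RelMap (rSym n) ![x, y]
  Sn := fun i x y => ∃ h : 2 ≤ i ∧ i ≤ n,
    FirstOrder.Language.Structure.RelMap (snSym n i h) ![x, y]
  Rn := fun i x y => ∃ h : 2 ≤ i ∧ i ≤ n,
    FirstOrder.Language.Structure.RelMap (rnSym n i h) ![x, y]
  Pn := fun i x => ∃ h : 2 ≤ i ∧ i ≤ n,
    FirstOrder.Language.Structure.RelMap (pnSym n i h) ![x]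

/-- The `σ_n`-structure determined by an interpretation bundle. -/
def strOf (n : ℕ) {A : Type*} (I : Interp A) : (sig n).Structure A where
  funMap := fun {m} f _ => Empty.elim f
  RelMap := fun {m} =>
    match m with
    | 0 => fun r _ => Empty.elim r
    | 1 => fun r v => I.Pn r.1 (v 0)
    | 2 => fun r v =>
        match r with
        | Sum.inl i =>
            if i = 0 then I.le (v 0) (v 1)
            else if i = 1 then I.S (v 0) (v 1) else I.R (v 0) (v 1)
        | Sum.inr (j, b) => if b then I.Rn j.1 (v 0) (v 1) else I.Sn j.1 (v 0) (v 1)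
    | _ + 3 => fun r _ => Empty.elim r

/-! ### Concrete construction of the structures `Tot_{n,k}`, `Gap_{n,k}`, `M_{n,k}`, `N_{n,k}` -/

/-- A finite ordered `σ`-interpretation with universe `{0, …, last}` (i.e. `Fin (last+1)`),
where `≤` is the natural linear order; the remaining relations are given as predicates on
the underlying natural numbers. -/
structure NInterp where
  last : ℕ
  S : ℕ → ℕ → Prop
  R : ℕ → ℕ → Prop
  Sn : ℕ → ℕ → ℕ → Prop
  Rn : ℕ → ℕ → ℕ → Prop
  Pn : ℕ → ℕ → Prop

/-- The universe of an `NInterp`. -/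
abbrev NInterp.Carrier (I : NInterp) : Type := Fin (I.last + 1)

/-- The interpretation bundle of an `NInterp`. -/
def NInterp.toInterp (I : NInterp) : Interp I.Carrier where
  le := fun x y => x ≤ y
  S := fun x y => I.S x.1 y.1
  R := fun x y => I.R x.1 y.1
  Sn := fun i x y => I.Sn i x.1 y.1
  Rn := fun i x y => I.Rn i x.1 y.1
  Pn := fun i x => I.Pn i x.1

/-- The ordered sum of two `NInterp`s: the maximum (`I.last`) of the first is identified
with the minimum (`0`) of the second, and all relations other than `≤` are unions. -/
def glue2 (I J : NInterp) : NInterp where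
  last := I.last + J.last
  S := fun x y => I.S x y ∨ ∃ a b, J.S a b ∧ x = I.last + a ∧ y = I.last + b
  R := fun x y => I.R x y ∨ ∃ a b, J.R a b ∧ x = I.last + a ∧ y = I.last + b
  Sn := fun i x y => I.Sn i x y ∨ ∃ a b, J.Sn i a b ∧ x = I.last + a ∧ y = I.last + b
  Rn := fun i x y => I.Rn i x y ∨ ∃ a b, J.Rn i a b ∧ x = I.last + a ∧ y = I.last + b
  Pn := fun i x => I.Pn i x ∨ ∃ a, J.Pn i a ∧ x = I.last + a

/-- Iterated ordered sum `I ⊕ J₁ ⊕ ⋯ ⊕ Jₘ`. -/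
def glueList : NInterp → List NInterp → NInterp
  | I, [] => I
  | I, J :: rest => glueList (glue2 I J) rest

/-- The ordered sum of `c` copies of `I` (for `c ≥ 1`). -/
def glueRep (I : NInterp) (c : ℕ) : NInterp :=
  glueList I (List.replicate (c - 1) I)

/-- `Tot_{1,k}` : universe of size `m = 6(k+2)²`, `S` the full successor relation,
`R = {(min, max)}`. -/
def Tot1 (k : ℕ) : NInterp where
  last := 6 * (k + 2) ^ 2 - 1
  S := fun x y => y = x + 1
  R := fun x y => x = 0 ∧ y = 6 * (k + 2) ^ 2 - 1
  Sn := fun _ _ _ => False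
  Rn := fun _ _ _ => False
  Pn := fun _ _ => False

/-- `Gap_{1,k}` : as `Tot_{1,k}` but with the central successor pair
`(m/2, m/2+1)` (1-indexed) removed from `S`. -/
def Gap1 (k : ℕ) : NInterp where
  last := 6 * (k + 2) ^ 2 - 1
  S := fun x y => y = x + 1 ∧ y ≠ 3 * (k + 2) ^ 2
  R := fun x y => x = 0 ∧ y = 6 * (k + 2) ^ 2 - 1
  Sn := fun _ _ _ => False
  Rn := fun _ _ _ => False
  Pn := fun _ _ => False

/-- The expansion `A ↦ A⁺` from `σ_{n-1}` to `σ_n`: `P_n = {min, max}`,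
`S_n = {(min, max)}`, `R_n = ∅`. -/
def plusN (n : ℕ) (I : NInterp) : NInterp where
  last := I.last
  S := I.S
  R := I.R
  Sn := fun i x y => I.Sn i x y ∨ (i = n ∧ x = 0 ∧ y = I.last)
  Rn := I.Rn
  Pn := fun i x => I.Pn i x ∨ (i = n ∧ (x = 0 ∨ x = I.last))

/-- Add the pair `(min, max)` to the relation `R_n`. -/
def addRn (n : ℕ) (I : NInterp) : NInterp :=
  { I with Rn := fun i x y => I.Rn i x y ∨ (i = n ∧ x = 0 ∧ y = I.last) }

/-- `fam m k = (Tot_{m+1,k}, Gap_{m+1,k}, M_{m+1,k}, N_{m+1,k})`, by the inductive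
construction:
* `N_{n,k}` is the ordered sum of `4(k+3)^{2n+1} + 2k + 1` copies of `Gap_{n,k}` and
  `M_{n,k}` is obtained from it by replacing the central copy with `Tot_{n,k}`;
* for `n ≥ 2`, `Tot_{n,k}` is obtained from the ordered sum of `4(k+3)^{2n} + 2k + 1`
  copies of `M⁺_{n-1,k}` by adding `(min, max)` to `R_n`, and `Gap_{n,k}` is obtained from
  it by replacing the central copy with `N⁺_{n-1,k}`. -/
def fam : ℕ → ℕ → NInterp × NInterp × NInterp × NInterp
  | 0, k =>
      let T := Tot1 k
      let G := Gap1 k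
      let half := 2 * (k + 3) ^ 3 + k
      (T, G,
        glueList (glueRep G half) (T :: List.replicate half G),
        glueRep G (4 * (k + 3) ^ 3 + 2 * k + 1))
  | m + 1, k =>
      let p := fam m k
      let nn := m + 2
      let Mp := plusN nn p.2.2.1
      let Np := plusN nn p.2.2.2
      let halfT := 2 * (k + 3) ^ (2 * nn) + k
      let T := addRn nn (glueRep Mp (4 * (k + 3) ^ (2 * nn) + 2 * k + 1))
      let G := addRn nn (glueList (glueRep Mp halfT) (Np :: List.replicate halfT Mp))
      let halfN := 2 * (k + 3) ^ (2 * nn + 1) + k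
      (T, G,
        glueList (glueRep G halfN) (T :: List.replicate halfN G),
        glueRep G (4 * (k + 3) ^ (2 * nn + 1) + 2 * k + 1))

/-- The structure `Tot_{n,k}`. -/
def TotNK (n k : ℕ) : NInterp := (fam (n - 1) k).1
/-- The structure `Gap_{n,k}`. -/
def GapNK (n k : ℕ) : NInterp := (fam (n - 1) k).2.1
/-- The structure `M_{n,k}`. -/
def MNK (n k : ℕ) : NInterp := (fam (n - 1) k).2.2.1
/-- The structure `N_{n,k}`. -/
def NNK (n k : ℕ) : NInterp := (fam (n - 1) k).2.2.2

/-- The `σ_n`-structure on the universe of an `NInterp`. -/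
def strOfN (n : ℕ) (I : NInterp) : (sig n).Structure I.Carrier :=
  strOf n I.toInterp


/-- The vocabulary `{≤, S}` with two binary relation symbols (`0` for `≤`, `1` for `S`). -/
def LOS : FirstOrder.Language where
  Functions := fun _ => Empty
  Relations := fun m => match m with | 2 => Fin 2 | _ => Empty

/-- The `{≤, S}`-structure on `{0, …, m-1}` with the natural linear order and with `S`
interpreted by a given relation on the underlying naturals. -/
def losStr (m : ℕ) (S : ℕ → ℕ → Prop) : LOS.Structure (Fin m) where
  funMap := fun f _ => Empty.elim f
  RelMap := fun {a} =>
    match a with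
    | 0 => fun r _ => Empty.elim r
    | 1 => fun r _ => Empty.elim r
    | 2 => fun (r : Fin 2) v => if r = 0 then v 0 ≤ v 1 else S (v 0).1 (v 1).1
    | _ + 3 => fun r _ => Empty.elim r


/-- truncated-distance pattern equivalence of tuples -/
def Etup (t d1 d2 : ℕ) {ι : Type*} (a b : ι → ℕ) : Prop :=
  (∀ p, min t (a p) = min t (b p) ∧ min t (d1 - a p) = min t (d2 - b p)) ∧
  ∀ p q, min t (a q - a p) = min t (b q - b p)

lemma Etup.mono {t T d1 d2 : ℕ} {ι : Type*} {a b : ι → ℕ} (h : t ≤ T)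
    (hE : Etup T d1 d2 a b) : Etup t d1 d2 a b := by
  obtain ⟨h1, h2⟩ := hE
  exact ⟨fun p => ⟨by have := (h1 p).1; omega, by have := (h1 p).2; omega⟩,
    fun p q => by have := h2 p q; omega⟩

lemma Etup.symm {t d1 d2 : ℕ} {ι : Type*} {a b : ι → ℕ}
    (hE : Etup t d1 d2 a b) : Etup t d2 d1 b a :=
  ⟨fun p => ⟨(hE.1 p).1.symm, (hE.1 p).2.symm⟩, fun p q => (hE.2 p q).symm⟩

lemma Etup.congr {t d1 d2 : ℕ} {ι : Type*} {a b a' b' : ι → ℕ}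
    (hE : Etup t d1 d2 a b) (ha : ∀ p, a p = a' p) (hb : ∀ p, b p = b' p) :
    Etup t d1 d2 a' b' := by
  obtain ⟨h1, h2⟩ := hE
  exact ⟨fun p => by rw [← ha p, ← hb p]; exact h1 p,
    fun p q => by rw [← ha p, ← hb p, ← ha q, ← hb q]; exact h2 p q⟩

lemma Etup.comp {t d1 d2 : ℕ} {ι ι' : Type*} {a b : ι → ℕ} (f : ι' → ι)
    (hE : Etup t d1 d2 a b) : Etup t d1 d2 (a ∘ f) (b ∘ f) :=
  ⟨fun p => hE.1 (f p), fun p q => hE.2 (f p) (f q)⟩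

/-- The gap-splitting lemma. -/
lemma gap (t : ℕ) (ht : 1 ≤ t) :
    ∀ (c : ℕ) (κ : Type) (instκ : Fintype κ), Fintype.card κ ≤ c →
    ∀ (g g' : ℕ), (g = g' ∨ ((Fintype.card κ + 1) * t ≤ g ∧ (Fintype.card κ + 1) * t ≤ g')) →
    ∀ (o : κ → ℕ), (∀ i, o i ≤ g) →
    ∃ o' : κ → ℕ, (∀ i, o' i ≤ g') ∧
      (∀ i, min t (o i) = min t (o' i) ∧ min t (g - o i) = min t (g' - o' i)) ∧
      (∀ i i', min t (o i' - o i) = min t (o' i' - o' i)) := by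
  intro c
  induction c with
  | zero =>
    intro κ instκ hcard g g' hgg o ho
    have he : IsEmpty κ := Fintype.card_eq_zero_iff.mp (Nat.le_antisymm hcard (Nat.zero_le _))
    exact ⟨fun i => 0, fun i => he.elim i, fun i => he.elim i, fun i => he.elim i⟩
  | succ c ih =>
    intro κ instκ hcard g g' hgg o ho
    classical
    rcases isEmpty_or_nonempty κ with he | hne
    · exact ⟨fun i => 0, fun i => he.elim i, fun i => he.elim i, fun i => he.elim i⟩
    rcases hgg with heq | hbig
    · subst heq
      exact ⟨o, ho, fun i => ⟨rfl, rfl⟩, fun i i' => rfl⟩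
    obtain ⟨i0, -, hmin⟩ := Finset.exists_min_image Finset.univ o ⟨Classical.arbitrary κ, Finset.mem_univ _⟩
    have hmin' : ∀ i, o i0 ≤ o i := fun i => hmin i (Finset.mem_univ i)
    have hcards : Fintype.card κ = Fintype.card {i : κ // i ≠ i0} + 1 := by
      have h1 : Fintype.card {i : κ // i ≠ i0} = Fintype.card κ - Fintype.card {i : κ // i = i0} :=
        Fintype.card_subtype_compl _
      have h2 : Fintype.card {i : κ // i = i0} = 1 := Fintype.card_subtype_eq i0
      have h3 : 1 ≤ Fintype.card κ := Fintype.card_pos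
      omega
    have hc1t : t ≤ (Fintype.card {i : κ // i ≠ i0} + 1) * t := Nat.le_mul_of_pos_left t (by omega)
    have hcc : (Fintype.card κ + 1) * t = (Fintype.card {i : κ // i ≠ i0} + 1) * t + t := by
      rw [hcards]; ring
    obtain ⟨om', hC1, hC2, hC3, hC4⟩ :
        ∃ om', min t (o i0) = min t om' ∧ om' ≤ g' ∧ min t (g - o i0) = min t (g' - om') ∧
          ((g - o i0 = g' - om') ∨ ((Fintype.card {i : κ // i ≠ i0} + 1) * t ≤ g - o i0 ∧
            (Fintype.card {i : κ // i ≠ i0} + 1) * t ≤ g' - om')) := by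
      have hio := ho i0
      refine ⟨if o i0 < t then o i0 else
        (if g - o i0 < (Fintype.card {i : κ // i ≠ i0} + 1) * t then g' - (g - o i0) else t), ?_⟩
      split_ifs with h1 h2 <;> refine ⟨by omega, by omega, by omega, by omega⟩
    have hcard' : Fintype.card {i : κ // i ≠ i0} ≤ c := by omega
    obtain ⟨o'', hb'', hpt'', hpr''⟩ := ih {i : κ // i ≠ i0} _ hcard' (g - o i0) (g' - om') hC4
      (fun i => o i.1 - o i0) (fun i => by show o i.1 - o i0 ≤ g - o i0; have := ho i.1; omega)
    -- clean up the recursion output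
    have hb2 : ∀ (i : κ) (h : i ≠ i0), o'' ⟨i, h⟩ ≤ g' - om' := fun i h => hb'' ⟨i, h⟩
    have hB1 : ∀ (i : κ) (h : i ≠ i0), min t (o i - o i0) = min t (o'' ⟨i, h⟩) :=
      fun i h => (hpt'' ⟨i, h⟩).1
    have hB2 : ∀ (i : κ) (h : i ≠ i0),
        min t ((g - o i0) - (o i - o i0)) = min t ((g' - om') - o'' ⟨i, h⟩) :=
      fun i h => (hpt'' ⟨i, h⟩).2
    have hB3 : ∀ (i i' : κ) (h : i ≠ i0) (h' : i' ≠ i0),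
        min t ((o i' - o i0) - (o i - o i0)) = min t (o'' ⟨i', h'⟩ - o'' ⟨i, h⟩) :=
      fun i i' h h' => hpr'' ⟨i, h⟩ ⟨i', h'⟩
    refine ⟨fun i => if h : i = i0 then om' else om' + o'' ⟨i, h⟩, ?_, ?_, ?_⟩
    · intro i
      dsimp only
      by_cases h : i = i0
      · rw [dif_pos h]; omega
      · rw [dif_neg h]; have := hb2 i h; omega
    · intro i
      dsimp only
      by_cases h : i = i0
      · subst h; rw [dif_pos rfl]; exact ⟨hC1, hC3⟩
      · rw [dif_neg h]
        have hb1 := hB1 i h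
        have hbb2 := hB2 i h
        have h1 := hmin' i
        have h2 := ho i
        have h3 := hb2 i h
        constructor <;> omega
    · intro i i'
      dsimp only
      by_cases h : i = i0 <;> by_cases h' : i' = i0
      · subst h'; rw [h]; simp
      · subst h
        rw [dif_pos rfl, dif_neg h']
        have hb1 := hB1 i' h'
        have h1 := hmin' i'
        omega
      · subst h'
        rw [dif_pos rfl, dif_neg h]
        have h1 := hmin' i
        have h2 := hb2 i h
        omega
      · rw [dif_neg h, dif_neg h']
        have hb3 := hB3 i i' h h'
        have h1 := hmin' i
        have h2 := hmin' i'
        have h3 := hb2 i h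
        have h4 := hb2 i' h'
        omega

/-- The block extension lemma. -/
lemma extend (t : ℕ) (ht : 1 ≤ t) :
    ∀ (c : ℕ) (ι : Type) (instι : Fintype ι), Fintype.card ι ≤ c →
    ∀ (κ : Type) (instκ : Fintype κ) (T : ℕ), (Fintype.card κ + 1) * t ≤ T →
    ∀ (d1 d2 : ℕ), (d1 = d2 ∨ (T ≤ d1 ∧ T ≤ d2)) →
    ∀ (a : ι → ℕ) (b : ι → ℕ), (∀ p, a p ≤ d1) → (∀ p, b p ≤ d2) →
    Etup T d1 d2 a b →
    ∀ (cnew : κ → ℕ), (∀ i, cnew i ≤ d1) →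
    ∃ e : κ → ℕ, (∀ i, e i ≤ d2) ∧ Etup t d1 d2 (Sum.elim a cnew) (Sum.elim b e) := by
  intro c
  induction c with
  | zero =>
    intro ι instι hcard κ instκ T hT d1 d2 hd a b ha hb hE cnew hc
    have he : IsEmpty ι := Fintype.card_eq_zero_iff.mp (Nat.le_antisymm hcard (Nat.zero_le _))
    have hgg : d1 = d2 ∨ ((Fintype.card κ + 1) * t ≤ d1 ∧ (Fintype.card κ + 1) * t ≤ d2) := by
      rcases hd with h | h
      · exact Or.inl h
      · exact Or.inr ⟨le_trans hT h.1, le_trans hT h.2⟩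
    obtain ⟨o', hb', hpt', hpr'⟩ := gap t ht (Fintype.card κ) κ instκ le_rfl d1 d2 hgg cnew hc
    refine ⟨o', hb', ⟨fun p => ?_, fun p q => ?_⟩⟩
    · cases p with
      | inl p => exact he.elim p
      | inr i => exact ⟨(hpt' i).1, (hpt' i).2⟩
    · cases p with
      | inl p => exact he.elim p
      | inr i =>
        cases q with
        | inl q => exact he.elim q
        | inr i' => exact hpr' i i'
  | succ c ih =>
    intro ι instι hcard κ instκ T hT d1 d2 hd a b ha hb hE cnew hc
    classical
    have ht' : t ≤ T := by
      have : t ≤ (Fintype.card κ + 1) * t := Nat.le_mul_of_pos_left t (by omega)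
      omega
    rcases isEmpty_or_nonempty ι with he | hne
    · -- same as the base case
      have hgg : d1 = d2 ∨ ((Fintype.card κ + 1) * t ≤ d1 ∧ (Fintype.card κ + 1) * t ≤ d2) := by
        rcases hd with h | h
        · exact Or.inl h
        · exact Or.inr ⟨le_trans hT h.1, le_trans hT h.2⟩
      obtain ⟨o', hb', hpt', hpr'⟩ := gap t ht (Fintype.card κ) κ instκ le_rfl d1 d2 hgg cnew hc
      refine ⟨o', hb', ⟨fun p => ?_, fun p q => ?_⟩⟩
      · cases p with
        | inl p => exact he.elim p
        | inr i => exact ⟨(hpt' i).1, (hpt' i).2⟩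
      · cases p with
        | inl p => exact he.elim p
        | inr i =>
          cases q with
          | inl q => exact he.elim q
          | inr i' => exact hpr' i i'
    -- pick the maximal existing point
    obtain ⟨p0, -, hmax⟩ := Finset.exists_max_image Finset.univ a
      ⟨Classical.arbitrary ι, Finset.mem_univ _⟩
    have hamax : ∀ q, a q ≤ a p0 := fun q => hmax q (Finset.mem_univ q)
    have hbmax : ∀ q, b q ≤ b p0 := by
      intro q
      have h1 := hE.2 p0 q
      have h2 := hamax q
      omega
    have hp0b : min t (a p0) = min t (b p0) := by have := (hE.1 p0).1; omega
    have hp0t : min t (d1 - a p0) = min t (d2 - b p0) := by have := (hE.1 p0).2; omega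
    -- the lower recursive problem
    have hcards : Fintype.card ι = Fintype.card {q : ι // q ≠ p0} + 1 := by
      have h1 : Fintype.card {q : ι // q ≠ p0} =
          Fintype.card ι - Fintype.card {q : ι // q = p0} := Fintype.card_subtype_compl _
      have h2 : Fintype.card {q : ι // q = p0} = 1 := Fintype.card_subtype_eq p0
      have h3 : 1 ≤ Fintype.card ι := Fintype.card_pos
      omega
    have hcardL : Fintype.card {i : κ // cnew i ≤ a p0} ≤ Fintype.card κ :=
      Fintype.card_subtype_le _
    have hcardU : Fintype.card {i : κ // ¬ cnew i ≤ a p0} ≤ Fintype.card κ :=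
      Fintype.card_subtype_le _
    obtain ⟨eL, heLb, hEL⟩ := ih {q : ι // q ≠ p0} _ (by omega) {i : κ // cnew i ≤ a p0} _ T
      (by have : (Fintype.card {i : κ // cnew i ≤ a p0} + 1) * t ≤ (Fintype.card κ + 1) * t :=
            Nat.mul_le_mul_right t (by omega)
          omega)
      (a p0) (b p0) (by have := (hE.1 p0).1; omega)
      (fun q => a q.1) (fun q => b q.1) (fun q => hamax q.1) (fun q => hbmax q.1)
      ⟨fun q => ⟨(hE.1 q.1).1, hE.2 q.1 p0⟩, fun q q' => hE.2 q.1 q'.1⟩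
      (fun i => cnew i.1) (fun i => i.2)
    -- the upper gap problem
    have hgap : d1 - a p0 = d2 - b p0 ∨
        ((Fintype.card {i : κ // ¬ cnew i ≤ a p0} + 1) * t ≤ d1 - a p0 ∧
         (Fintype.card {i : κ // ¬ cnew i ≤ a p0} + 1) * t ≤ d2 - b p0) := by
      have h1 := (hE.1 p0).2
      have h2 : (Fintype.card {i : κ // ¬ cnew i ≤ a p0} + 1) * t ≤ (Fintype.card κ + 1) * t :=
        Nat.mul_le_mul_right t (by omega)
      omega
    obtain ⟨oU, hoUb, hoUpt, hoUpr⟩ := gap t ht (Fintype.card {i : κ // ¬ cnew i ≤ a p0})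
      _ _ le_rfl (d1 - a p0) (d2 - b p0) hgap
      (fun i => cnew i.1 - a p0) (fun i => by show cnew i.1 - a p0 ≤ d1 - a p0; have := hc i.1; omega)
    -- notation for the recursive tuples
    set AL : {q : ι // q ≠ p0} ⊕ {i : κ // cnew i ≤ a p0} → ℕ :=
      Sum.elim (fun q => a q.1) (fun i => cnew i.1) with hALdef
    set BL : {q : ι // q ≠ p0} ⊕ {i : κ // cnew i ≤ a p0} → ℕ :=
      Sum.elim (fun q => b q.1) eL with hBLdef
    have hALle : ∀ u, AL u ≤ a p0 := by
      intro u; cases u with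
      | inl q => exact hamax q.1
      | inr i => exact i.2
    have hBLle : ∀ u, BL u ≤ b p0 := by
      intro u; cases u with
      | inl q => exact hbmax q.1
      | inr i => exact heLb i
    have hELpt : ∀ u, min t (AL u) = min t (BL u) ∧
        min t (a p0 - AL u) = min t (b p0 - BL u) := hEL.1
    have hELpr : ∀ u u', min t (AL u' - AL u) = min t (BL u' - BL u) := hEL.2
    have hoUpt1 : ∀ i, min t (cnew i.1 - a p0) = min t (oU i) := fun i => (hoUpt i).1
    have hoUpt2 : ∀ i, min t ((d1 - a p0) - (cnew i.1 - a p0)) = min t ((d2 - b p0) - oU i) :=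
      fun i => (hoUpt i).2
    have hoUpr' : ∀ i i', min t ((cnew i'.1 - a p0) - (cnew i.1 - a p0)) = min t (oU i' - oU i) :=
      fun i i' => hoUpr i i'
    -- the extension
    set e0 : κ → ℕ := fun i => if h : cnew i ≤ a p0 then eL ⟨i, h⟩ else b p0 + oU ⟨i, h⟩ with he0
    have he0L : ∀ (i : κ) (h : cnew i ≤ a p0), e0 i = eL ⟨i, h⟩ := by
      intro i h; rw [he0]; exact dif_pos h
    have he0U : ∀ (i : κ) (h : ¬ cnew i ≤ a p0), e0 i = b p0 + oU ⟨i, h⟩ := by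
      intro i h; rw [he0]; exact dif_neg h
    -- classification of the combined indices
    have hclass : ∀ s : ι ⊕ κ,
        (∃ u, Sum.elim a cnew s = AL u ∧ Sum.elim b e0 s = BL u) ∨
        (∃ i : {i : κ // ¬ cnew i ≤ a p0},
          Sum.elim a cnew s = a p0 + (cnew i.1 - a p0) ∧ Sum.elim b e0 s = b p0 + oU i) ∨
        (Sum.elim a cnew s = a p0 ∧ Sum.elim b e0 s = b p0) := by
      intro s
      cases s with
      | inl q =>
        by_cases h : q = p0
        · exact Or.inr (Or.inr ⟨by subst h; rfl, by subst h; rfl⟩)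
        · exact Or.inl ⟨Sum.inl ⟨q, h⟩, rfl, rfl⟩
      | inr i =>
        by_cases h : cnew i ≤ a p0
        · exact Or.inl ⟨Sum.inr ⟨i, h⟩, rfl, (he0L i h : e0 i = _)⟩
        · refine Or.inr (Or.inl ⟨⟨i, h⟩, by simp only [Sum.elim_inr]; omega, he0U i h⟩)
    refine ⟨e0, ?_, fun s => ?_, fun p q => ?_⟩
    · intro i
      by_cases h : cnew i ≤ a p0
      · rw [he0L i h]
        have := heLb ⟨i, h⟩
        have := hb p0
        omega
      · rw [he0U i h]
        have := hoUb ⟨i, h⟩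
        have := hb p0
        omega
    · -- per-point clauses
      have had1 := ha p0
      have hbd2 := hb p0
      rcases hclass s with ⟨u, h1, h2⟩ | ⟨i, h1, h2⟩ | ⟨h1, h2⟩ <;> rw [h1, h2]
      · have k1 := (hELpt u).1
        have k2 := (hELpt u).2
        have k3 := hALle u
        have k4 := hBLle u
        constructor <;> omega
      · have k1 := hoUpt1 i
        have k2 := hoUpt2 i
        have k3 : cnew i.1 - a p0 ≤ d1 - a p0 := by have := hc i.1; omega
        have k4 := hoUb i
        have k5 : a p0 ≤ cnew i.1 := by have := i.2; omega
        constructor <;> omega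
      · exact ⟨hp0b, hp0t⟩
    · -- pair clauses
      have had1 := ha p0
      have hbd2 := hb p0
      rcases hclass p with ⟨u, h1, h2⟩ | ⟨i, h1, h2⟩ | ⟨h1, h2⟩ <;>
        rcases hclass q with ⟨u', g1, g2⟩ | ⟨i', g1, g2⟩ | ⟨g1, g2⟩ <;>
        rw [h1, h2, g1, g2]
      · exact hELpr u u'
      · have k1 := (hELpt u).2
        have k2 := hoUpt1 i'
        have k3 := hALle u
        have k4 := hBLle u
        omega
      · have k1 := (hELpt u).2
        have k3 := hALle u
        have k4 := hBLle u
        omega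
      · have k3 := hALle u'
        have k4 := hBLle u'
        omega
      · have k1 := hoUpr' i i'
        omega
      · omega
      · have k3 := hALle u'
        have k4 := hBLle u'
        omega
      · have k2 := hoUpt1 i'
        omega
      · omega


/-! ### Logic part -/

instance losSuccInst (m : ℕ) : LOS.Structure (Fin m) := losStr m (fun x y => y = x + 1)

lemma realize_exN {L : FirstOrder.Language} {α : Type*} {M : Type*} [L.Structure M] :
    ∀ (j : ℕ) {m : ℕ} (φ : L.BoundedFormula α (m + j)) (v : α → M) (xs : Fin m → M),
      (exN j φ).Realize v xs ↔ ∃ zs : Fin j → M, φ.Realize v (Fin.append xs zs)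
  | 0, m, φ, v, xs => by
    constructor
    · intro h
      exact ⟨Fin.elim0, by rwa [Fin.append_elim0]⟩
    · rintro ⟨zs, h⟩
      have hz : zs = Fin.elim0 := Subsingleton.elim _ _
      rw [hz, Fin.append_elim0] at h
      exact h
  | j + 1, m, φ, v, xs => by
    have hrec := realize_exN j (φ.ex) v xs
    rw [show exN (j+1) φ = exN j φ.ex from rfl, hrec]
    constructor
    · rintro ⟨zs, h⟩
      rw [BoundedFormula.realize_ex] at h
      obtain ⟨x, hx⟩ := h
      exact ⟨Fin.snoc zs x, by rwa [Fin.append_snoc]⟩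
    · rintro ⟨ws, h⟩
      refine ⟨Fin.init ws, ?_⟩
      rw [BoundedFormula.realize_ex]
      refine ⟨ws (Fin.last j), ?_⟩
      rw [← Fin.append_snoc, Fin.snoc_init_self]
      exact h

lemma realize_allN {L : FirstOrder.Language} {α : Type*} {M : Type*} [L.Structure M] :
    ∀ (j : ℕ) {m : ℕ} (φ : L.BoundedFormula α (m + j)) (v : α → M) (xs : Fin m → M),
      (allN j φ).Realize v xs ↔ ∀ zs : Fin j → M, φ.Realize v (Fin.append xs zs)
  | 0, m, φ, v, xs => by
    constructor
    · intro h zs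
      have hz : zs = Fin.elim0 := Subsingleton.elim _ _
      rw [hz, Fin.append_elim0]
      exact h
    · intro h
      have := h Fin.elim0
      rwa [Fin.append_elim0] at this
  | j + 1, m, φ, v, xs => by
    have hrec := realize_allN j (φ.all) v xs
    rw [show allN (j+1) φ = allN j φ.all from rfl, hrec]
    constructor
    · intro h ws
      have := h (Fin.init ws)
      rw [BoundedFormula.realize_all] at this
      have h2 := this (ws (Fin.last j))
      rwa [← Fin.append_snoc, Fin.snoc_init_self] at h2
    · intro h zs
      rw [BoundedFormula.realize_all]
      intro x
      have := h (Fin.snoc zs x)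
      rwa [Fin.append_snoc] at this

lemma los_term_var {β : Type*} (tm : LOS.Term β) : ∃ s, tm = FirstOrder.Language.Term.var s := by
  cases tm with
  | var s => exact ⟨s, rfl⟩
  | func f ts => exact Empty.elim f

lemma relMap_iff {m : ℕ} {S : ℕ → ℕ → Prop} (R : Fin 2) (vv : Fin 2 → Fin m) :
    @Structure.RelMap LOS (Fin m) (losStr m S) 2 R vv ↔
      (if R = 0 then vv 0 ≤ vv 1 else S (vv 0).1 (vv 1).1) := Iff.rfl

lemma qf_iff {m1 m2 : ℕ} {α : Type*} {j : ℕ} (φ : LOS.BoundedFormula α j) (hφ : φ.IsQF)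
    (v : α → Fin m1) (xs : Fin j → Fin m1) (w : α → Fin m2) (ys : Fin j → Fin m2)
    (hE : Etup 2 (m1-1) (m2-1) (fun s => ((Sum.elim v xs s : Fin m1) : ℕ))
      (fun s => ((Sum.elim w ys s : Fin m2) : ℕ))) :
    (@BoundedFormula.Realize LOS (Fin m1) (losSuccInst m1) α j φ v xs ↔
     @BoundedFormula.Realize LOS (Fin m2) (losSuccInst m2) α j φ w ys) := by
  have hEp : ∀ p q, min 2 ((Sum.elim v xs q : Fin m1).1 - (Sum.elim v xs p : Fin m1).1)
      = min 2 ((Sum.elim w ys q : Fin m2).1 - (Sum.elim w ys p : Fin m2).1) :=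
    fun p q => hE.2 p q
  induction hφ with
  | falsum => exact Iff.rfl
  | of_isAtomic h =>
    cases h with
    | equal t1 t2 =>
      obtain ⟨s1, rfl⟩ := los_term_var t1
      obtain ⟨s2, rfl⟩ := los_term_var t2
      simp only [BoundedFormula.realize_bdEqual, Term.realize_var]
      simp only [Fin.ext_iff]
      have h1 := hEp s1 s2
      have h2 := hEp s2 s1
      omega
    | @rel l R ts =>
      match l, R with
      | 0, R => exact Empty.elim R
      | 1, R => exact Empty.elim R
      | (n+3), R => exact Empty.elim R
      | 2, R =>
        obtain ⟨s0, hs0⟩ := los_term_var (ts 0)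
        obtain ⟨s1, hs1⟩ := los_term_var (ts 1)
        simp only [BoundedFormula.realize_rel]
        erw [relMap_iff, relMap_iff]
        simp only [hs0, hs1, Term.realize_var]
        have h1 := hEp s0 s1
        have h2 := hEp s1 s0
        by_cases hR : R = (0 : Fin 2)
        · simp only [hR, ↓reduceIte, Fin.le_def]
          omega
        · split_ifs <;> omega
  | imp h1 h2 ih1 ih2 =>
    simp only [BoundedFormula.realize_imp]
    exact imp_congr ih1 ih2

/-- threshold function -/
def tauF (k n : ℕ) : ℕ := 2 * (k + 1) ^ n

lemma two_le_tau (k n : ℕ) : 2 ≤ tauF k n := by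
  have : 1 ≤ (k + 1) ^ n := Nat.one_le_pow _ _ (by omega)
  simp [tauF]; omega

lemma tau_mono (k n : ℕ) : tauF k n ≤ tauF k (n + 1) := by
  have h := Nat.pow_le_pow_right (show 1 ≤ k + 1 by omega) (show n ≤ n + 1 by omega)
  simp only [tauF]
  omega

lemma tau_succ (k n : ℕ) : tauF k (n + 1) = (k + 1) * tauF k n := by
  simp only [tauF, pow_succ]; ring

lemma rho_succ (k n : ℕ) (hn : 1 ≤ n) : rho (n + 1) k = (k + 2) * (rho n k + 1) := by
  cases n with
  | zero => exact absurd hn (by omega)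
  | succ m => rfl

lemma tau_le_rho (k n : ℕ) (hn : 1 ≤ n) : tauF k n ≤ rho n k := by
  induction n with
  | zero => omega
  | succ n ih =>
    rcases Nat.eq_or_lt_of_le hn with h | h
    · have hn0 : n = 0 := by omega
      subst hn0
      have e1 : tauF k (0 + 1) = 2 * (k + 1) := by simp [tauF]
      have e2 : rho (0 + 1) k = 2 * k + 2 := rfl
      omega
    · have hn1 : 1 ≤ n := by omega
      have ih' := ih hn1
      rw [tau_succ, rho_succ k n hn1]
      calc (k + 1) * tauF k n ≤ (k + 1) * rho n k := Nat.mul_le_mul_left _ ih'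
        _ ≤ (k + 2) * (rho n k + 1) := by
            have h1 : (k + 1) * rho n k ≤ (k + 2) * rho n k := Nat.mul_le_mul_right _ (by omega)
            have h2 : (k + 2) * rho n k ≤ (k + 2) * (rho n k + 1) := Nat.mul_le_mul_left _ (by omega)
            omega

lemma Etup_append_assoc {t d1 d2 : ℕ} {α : Type*} {j j' : ℕ}
    {A : α ⊕ Fin j → ℕ} {A' : Fin j' → ℕ} {B : α ⊕ Fin j → ℕ} {B' : Fin j' → ℕ}
    (h : Etup t d1 d2 (Sum.elim A A') (Sum.elim B B')) :
    Etup t d1 d2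
      (Sum.elim (fun x => A (Sum.inl x)) (Fin.append (fun i => A (Sum.inr i)) A'))
      (Sum.elim (fun x => B (Sum.inl x)) (Fin.append (fun i => B (Sum.inr i)) B')) := by
  have hc := h.comp (Sum.elim (fun x : α => Sum.inl (Sum.inl x))
    (fun i : Fin (j + j') =>
      Fin.addCases (fun i1 => Sum.inl (Sum.inr i1)) (fun i2 => Sum.inr i2) i))
  refine hc.congr ?_ ?_ <;> intro s <;> rcases s with x | i
  · rfl
  · refine Fin.addCases (fun i1 => ?_) (fun i2 => ?_) i <;>
      simp [Fin.addCases_left, Fin.addCases_right, Fin.append_left, Fin.append_right]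
  · rfl
  · refine Fin.addCases (fun i1 => ?_) (fun i2 => ?_) i <;>
      simp [Fin.addCases_left, Fin.addCases_right, Fin.append_left, Fin.append_right]

/-- The main transfer lemma. -/
lemma transfer (k : ℕ) {m1 m2 : ℕ} (hm1 : 1 ≤ m1) (hm2 : 1 ≤ m2) :
    ∀ (n : ℕ) (bl : Bool) (α : Type) (instα : Fintype α) (j : ℕ)
      (φ : LOS.BoundedFormula α j),
      IsSigmaPi k bl n j φ →
      ∀ (v : α → Fin m1) (xs : Fin j → Fin m1) (w : α → Fin m2) (ys : Fin j → Fin m2),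
      Etup (tauF k n) (m1-1) (m2-1) (fun s => ((Sum.elim v xs s : Fin m1) : ℕ))
        (fun s => ((Sum.elim w ys s : Fin m2) : ℕ)) →
      ((m1 - 1 = m2 - 1) ∨ (tauF k n ≤ m1 - 1 ∧ tauF k n ≤ m2 - 1)) →
      @BoundedFormula.Realize LOS (Fin m1) (losSuccInst m1) α j φ v xs →
      @BoundedFormula.Realize LOS (Fin m2) (losSuccInst m2) α j φ w ys := by
  intro n
  induction n with
  | zero =>
    intro bl α instα j φ hφ v xs w ys hE hd hr
    have hQF : φ.IsQF := by cases bl <;> exact hφ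
    have h2 : (2:ℕ) ≤ tauF k 0 := two_le_tau k 0
    exact (qf_iff φ hQF v xs w ys (hE.mono h2)).mp hr
  | succ n ih =>
    intro bl α instα j φ hφ v xs w ys hE hd hr
    have hmono := tau_mono k n
    have htau1 : 1 ≤ tauF k n := le_trans (by omega) (two_le_tau k n)
    have hd' : (m1 - 1 = m2 - 1) ∨ (tauF k n ≤ m1 - 1 ∧ tauF k n ≤ m2 - 1) := by
      rcases hd with h | h
      · exact Or.inl h
      · exact Or.inr ⟨le_trans hmono h.1, le_trans hmono h.2⟩
    have hφ' : IsSigmaPi k (!bl) n j φ ∨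
        ∃ j' : ℕ, j' ≤ k ∧ ∃ ψ : LOS.BoundedFormula α (j + j'),
          IsSigmaPi k (!bl) n (j + j') ψ ∧ φ = if bl then exN j' ψ else allN j' ψ := hφ
    rcases hφ' with h | ⟨j', hj', ψ, hψ, hform⟩
    · exact ih (!bl) α instα j φ h v xs w ys (hE.mono hmono) hd' hr
    have hT : (Fintype.card (Fin j') + 1) * tauF k n ≤ tauF k (n + 1) := by
      rw [Fintype.card_fin, tau_succ]
      exact Nat.mul_le_mul_right _ (by omega)
    cases bl
    · -- universal block
      rw [if_neg (by simp)] at hform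
      subst hform
      rw [realize_allN] at hr ⊢
      intro zs'
      obtain ⟨e, heb, hEe⟩ := extend (tauF k n) htau1 (Fintype.card (α ⊕ Fin j)) (α ⊕ Fin j)
        inferInstance le_rfl (Fin j') inferInstance (tauF k (n+1)) hT (m2-1) (m1-1)
        (by rcases hd with h | h
            · exact Or.inl h.symm
            · exact Or.inr ⟨h.2, h.1⟩)
        (fun s => ((Sum.elim w ys s : Fin m2) : ℕ)) (fun s => ((Sum.elim v xs s : Fin m1) : ℕ))
        (fun p => by show ((Sum.elim w ys p : Fin m2) : ℕ) ≤ m2 - 1; have := (Sum.elim w ys p).isLt; omega)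
        (fun p => by show ((Sum.elim v xs p : Fin m1) : ℕ) ≤ m1 - 1; have := (Sum.elim v xs p).isLt; omega)
        hE.symm
        (fun i => ((zs' i : Fin m2) : ℕ)) (fun i => by show ((zs' i : Fin m2) : ℕ) ≤ m2 - 1; have := (zs' i).isLt; omega)
      set elift : Fin j' → Fin m1 := fun i => ⟨e i, by have := heb i; omega⟩ with helift
      have hE2 := Etup_append_assoc hEe.symm
      have hE3 : Etup (tauF k n) (m1-1) (m2-1)
          (fun s => ((Sum.elim v (Fin.append xs elift) s : Fin m1) : ℕ))
          (fun s => ((Sum.elim w (Fin.append ys zs') s : Fin m2) : ℕ)) := by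
        refine hE2.congr ?_ ?_ <;> intro s <;> rcases s with x | i
        · rfl
        · refine Fin.addCases (fun i1 => ?_) (fun i2 => ?_) i <;>
            simp [Fin.append_left, Fin.append_right, helift]
        · rfl
        · refine Fin.addCases (fun i1 => ?_) (fun i2 => ?_) i <;>
            simp [Fin.append_left, Fin.append_right]
      exact ih true α instα (j + j') ψ hψ v (Fin.append xs elift) w (Fin.append ys zs')
        hE3 hd' (hr elift)
    · -- existential block
      rw [if_pos rfl] at hform
      subst hform
      rw [realize_exN] at hr ⊢
      obtain ⟨zs, hz⟩ := hr
      obtain ⟨e, heb, hEe⟩ := extend (tauF k n) htau1 (Fintype.card (α ⊕ Fin j)) (α ⊕ Fin j)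
        inferInstance le_rfl (Fin j') inferInstance (tauF k (n+1)) hT (m1-1) (m2-1) hd
        (fun s => ((Sum.elim v xs s : Fin m1) : ℕ)) (fun s => ((Sum.elim w ys s : Fin m2) : ℕ))
        (fun p => by show ((Sum.elim v xs p : Fin m1) : ℕ) ≤ m1 - 1; have := (Sum.elim v xs p).isLt; omega)
        (fun p => by show ((Sum.elim w ys p : Fin m2) : ℕ) ≤ m2 - 1; have := (Sum.elim w ys p).isLt; omega)
        hE
        (fun i => ((zs i : Fin m1) : ℕ)) (fun i => by show ((zs i : Fin m1) : ℕ) ≤ m1 - 1; have := (zs i).isLt; omega)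
      set elift : Fin j' → Fin m2 := fun i => ⟨e i, by have := heb i; omega⟩ with helift
      refine ⟨elift, ?_⟩
      have hE2 := Etup_append_assoc hEe
      have hE3 : Etup (tauF k n) (m1-1) (m2-1)
          (fun s => ((Sum.elim v (Fin.append xs zs) s : Fin m1) : ℕ))
          (fun s => ((Sum.elim w (Fin.append ys elift) s : Fin m2) : ℕ)) := by
        refine hE2.congr ?_ ?_ <;> intro s <;> rcases s with x | i
        · rfl
        · refine Fin.addCases (fun i1 => ?_) (fun i2 => ?_) i <;>
            simp [Fin.append_left, Fin.append_right]
        · rfl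
        · refine Fin.addCases (fun i1 => ?_) (fun i2 => ?_) i <;>
            simp [Fin.append_left, Fin.append_right, helift]
      exact ih false α instα (j + j') ψ hψ v (Fin.append xs zs) w (Fin.append ys elift)
        hE3 hd' hz

/-- if `m1, m2 > ρ(n,k)` then `L_{m1}* ⇛_{n,k} L_{m2}*`.
(`L_m` is `{1, …, m}` with the natural order and the successor relation, presented
0-indexed on `Fin m`.) -/
theorem statement_12 (n k : ℕ) (hn : 1 ≤ n) (hk : 1 ≤ k) (m1 m2 : ℕ)
    (h1 : rho n k < m1) (h2 : rho n k < m2) :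
    @SigImpStar LOS n k (Fin m1) (losStr m1 (fun x y => y = x + 1))
      ⟨0, by omega⟩ ⟨m1 - 1, by omega⟩
      (Fin m2) (losStr m2 (fun x y => y = x + 1))
      ⟨0, by omega⟩ ⟨m2 - 1, by omega⟩ := by
  intro φ hφ hr
  have hm1 : 1 ≤ m1 := by omega
  have hm2 : 1 ≤ m2 := by omega
  have htau : tauF k n ≤ rho n k := tau_le_rho k n hn
  have hd : (m1 - 1 = m2 - 1) ∨ (tauF k n ≤ m1 - 1 ∧ tauF k n ≤ m2 - 1) :=
    Or.inr ⟨by omega, by omega⟩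
  have hE : Etup (tauF k n) (m1-1) (m2-1)
      (fun s => ((Sum.elim (![⟨0, by omega⟩, ⟨m1 - 1, by omega⟩] : Fin 2 → Fin m1)
        (default : Fin 0 → Fin m1) s : Fin m1) : ℕ))
      (fun s => ((Sum.elim (![⟨0, by omega⟩, ⟨m2 - 1, by omega⟩] : Fin 2 → Fin m2)
        (default : Fin 0 → Fin m2) s : Fin m2) : ℕ)) := by
    have hv1 : ∀ x : Fin 2, ((![(⟨0, by omega⟩ : Fin m1), ⟨m1 - 1, by omega⟩] x : Fin m1) : ℕ)
        = if x = 0 then 0 else m1 - 1 := by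
      intro x
      fin_cases x <;> simp
    have hv2 : ∀ x : Fin 2, ((![(⟨0, by omega⟩ : Fin m2), ⟨m2 - 1, by omega⟩] x : Fin m2) : ℕ)
        = if x = 0 then 0 else m2 - 1 := by
      intro x
      fin_cases x <;> simp
    constructor
    · intro p
      rcases p with x | i
      · simp only [Sum.elim_inl, hv1, hv2]
        split_ifs <;> constructor <;> omega
      · exact i.elim0
    · intro p q
      rcases p with x | i
      · rcases q with y | i
        · simp only [Sum.elim_inl, hv1, hv2]
          split_ifs <;> omega
        · exact i.elim0
      · exact i.elim0
  exact transfer k hm1 hm2 n true (Fin 2) inferInstance 0 φ hφ _ default _ default hE hd hr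

end Paper
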